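/- Let q ∈ ℂ with |q| < 1, let d be an odd positive integer, let χ : ℕ → ℂ be d-periodic, and let x ≥ 0 be a real number with q^x defined as exp(x log q) (or take x ∈ ℕ). Then for every n ∈ ℕ, 2 ∑_{m=0}^∞ χ(m) (−1)^m [m+x]_q^n = (2/(1−q)^n) ∑_{a=0}^{d−1} χ(a) (−1)^a ∑_{l=0}^n C(n,l) (−1)^l q^{l(a+x)} / (1 + q^{ld}). -/

import Mathlib

open Filter Finset

/-- Abel summation: `HasAbelSum a S` means `∑ a(m) r^m → S` as `r → 1⁻`. -/
def HasAbelSum (a : ℕ → ℂ) (S : ℂ) : Prop :=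
  Tendsto (fun r : ℝ => ∑' m : ℕ, a m * (r : ℂ) ^ m) (nhdsWithin 1 (Set.Iio 1)) (nhds S)


lemma one_add_ne (w : ℂ) (hw : ‖w‖ < 1) : 1 + w ≠ 0 := by
  intro h
  have : w = -1 := by linear_combination h
  rw [this] at hw; simp at hw

lemma chi_mod {χ : ℕ → ℂ} {d : ℕ} (hd0 : 0 < d) (hχ : ∀ m, χ (m + d) = χ m) (m : ℕ) :
    χ m = χ (m % d) := by
  conv_lhs => rw [← Nat.mod_add_div m d]
  generalize m / d = k
  induction k with
  | zero => simp
  | succ k ih => rw [Nat.mul_succ, ← add_assoc, hχ, ih]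

lemma summable_aux {χ : ℕ → ℂ} {d : ℕ} (hd0 : 0 < d) (hχ : ∀ m, χ (m + d) = χ m)
    (z : ℂ) (hz : ‖z‖ < 1) : Summable (fun m : ℕ => χ m * (-1 : ℂ) ^ m * z ^ m) := by
  apply Summable.of_norm
  have hb : Summable (fun m : ℕ => (∑ a ∈ range d, ‖χ a‖) * ‖z‖ ^ m) :=
    (summable_geometric_of_lt_one (norm_nonneg z) hz).mul_left _
  apply hb.of_nonneg_of_le (fun m => norm_nonneg _)
  intro m
  rw [norm_mul, norm_mul, norm_pow, norm_pow, norm_neg, norm_one, one_pow, mul_one]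
  apply mul_le_mul_of_nonneg_right _ (pow_nonneg (norm_nonneg z) m)
  rw [chi_mod hd0 hχ m]
  exact Finset.single_le_sum (f := fun a => ‖χ a‖) (fun a _ => norm_nonneg _)
    (mem_range.mpr (Nat.mod_lt m hd0))

lemma key {χ : ℕ → ℂ} {d : ℕ} (hd : Odd d) (hd0 : 0 < d) (hχ : ∀ m, χ (m + d) = χ m)
    (z : ℂ) (hz : ‖z‖ < 1) :
    ∑' m : ℕ, χ m * (-1 : ℂ) ^ m * z ^ m
      = (∑ a ∈ range d, χ a * (-1 : ℂ) ^ a * z ^ a) / (1 + z ^ d) := by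
  have hsum := summable_aux hd0 hχ z hz
  have hzd : ‖z ^ d‖ < 1 := by
    rw [norm_pow]; exact pow_lt_one₀ (norm_nonneg z) hz hd0.ne'
  have hne : (1 : ℂ) + z ^ d ≠ 0 := one_add_ne _ hzd
  have h1 := Summable.sum_add_tsum_nat_add (f := fun m => χ m * (-1 : ℂ) ^ m * z ^ m) d hsum
  have h2 : ∀ m : ℕ, χ (m + d) * (-1 : ℂ) ^ (m + d) * z ^ (m + d)
      = (-(z ^ d)) * (χ m * (-1 : ℂ) ^ m * z ^ m) := by
    intro m
    rw [hχ, pow_add, pow_add, hd.neg_one_pow]; ring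
  rw [tsum_congr h2, tsum_mul_left] at h1
  set S := ∑' m : ℕ, χ m * (-1 : ℂ) ^ m * z ^ m
  beta_reduce at h1
  rw [eq_div_iff hne]
  linear_combination -h1


/-- Equation (10): for `|q| < 1`, `d` odd, `χ` `d`-periodic, `x, n ∈ ℕ`,
`2 ∑_{m≥0} χ(m)(−1)^m [m+x]_q^n
  = (2/(1−q)^n) ∑_{a<d} χ(a)(−1)^a ∑_{l≤n} C(n,l)(−1)^l q^{l(a+x)}/(1+q^{ld})`,
the series being understood in the Abel sense. -/
theorem q_euler_series_eq (q : ℂ) (hq : ‖q‖ < 1) (d : ℕ) (hd : Odd d) (hd0 : 0 < d)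
    (χ : ℕ → ℂ) (hχ : ∀ m, χ (m + d) = χ m) (x n : ℕ) :
    HasAbelSum (fun m => 2 * χ m * (-1 : ℂ) ^ m * ((1 - q ^ (m + x)) / (1 - q)) ^ n)
      ((2 / (1 - q) ^ n) * ∑ a ∈ Finset.range d, χ a * (-1 : ℂ) ^ a *
        ∑ l ∈ Finset.range (n + 1),
          (n.choose l : ℂ) * (-1 : ℂ) ^ l * q ^ (l * (a + x)) / (1 + q ^ (l * d))) := by
  have hq' : ‖q‖ < 1 := hq
  -- the auxiliary function
  set g : ℝ → ℂ := fun r => (2 / (1 - q) ^ n) * ∑ l ∈ Finset.range (n + 1),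
      (n.choose l : ℂ) * (-1 : ℂ) ^ l * q ^ (l * x) *
        ((∑ a ∈ Finset.range d, χ a * (-1 : ℂ) ^ a * ((r : ℂ) * q ^ l) ^ a) /
          (1 + ((r : ℂ) * q ^ l) ^ d)) with hg
  have hrq : ∀ (r : ℝ), 0 ≤ r → r < 1 → ∀ l : ℕ, ‖(r : ℂ) * q ^ l‖ < 1 := by
    intro r h0 h1 l
    rw [norm_mul, Complex.norm_real, Real.norm_of_nonneg h0, norm_pow]
    calc r * ‖q‖ ^ l ≤ r * 1 := by
          exact mul_le_mul_of_nonneg_left (pow_le_one₀ (norm_nonneg q) hq'.le) h0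
      _ < 1 := by simpa using h1
  have hden : ∀ (r : ℝ), 0 ≤ r → r ≤ 1 → ∀ l : ℕ, 1 + ((r : ℂ) * q ^ l) ^ d ≠ 0 := by
    intro r h0 h1 l
    rcases Nat.eq_zero_or_pos l with hl | hl
    · subst hl
      simp only [pow_zero, mul_one]
      rw [show ((r : ℂ)) ^ d = ((r ^ d : ℝ) : ℂ) by push_cast; ring]
      rw [show (1 : ℂ) + ((r ^ d : ℝ) : ℂ) = ((1 + r ^ d : ℝ) : ℂ) by push_cast; ring]
      rw [Ne, Complex.ofReal_eq_zero]
      positivity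
    · apply one_add_ne
      rw [norm_pow]
      apply pow_lt_one₀ (norm_nonneg _) _ hd0.ne'
      rw [norm_mul, Complex.norm_real, Real.norm_of_nonneg h0, norm_pow]
      calc r * ‖q‖ ^ l ≤ 1 * ‖q‖ ^ l := by
            exact mul_le_mul_of_nonneg_right h1 (pow_nonneg (norm_nonneg q) l)
        _ = ‖q‖ ^ l := one_mul _
        _ < 1 := pow_lt_one₀ (norm_nonneg q) hq' hl.ne'
  -- Step 1: g tends to the claimed value
  have hcont : ContinuousAt g 1 := by
    apply ContinuousAt.mul continuousAt_const
    apply tendsto_finset_sum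
    intro l _
    apply ContinuousAt.mul continuousAt_const
    apply ContinuousAt.div
    · apply tendsto_finset_sum
      intro a _
      exact ContinuousAt.mul continuousAt_const
        ((Complex.continuous_ofReal.continuousAt.mul continuousAt_const).pow a)
    · exact ContinuousAt.add continuousAt_const
        ((Complex.continuous_ofReal.continuousAt.mul continuousAt_const).pow d)
    · exact hden 1 zero_le_one le_rfl l
  have hg1 : g 1 = (2 / (1 - q) ^ n) * ∑ a ∈ Finset.range d, χ a * (-1 : ℂ) ^ a *
      ∑ l ∈ Finset.range (n + 1),
        (n.choose l : ℂ) * (-1 : ℂ) ^ l * q ^ (l * (a + x)) / (1 + q ^ (l * d)) := by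
    rw [hg]
    simp only [Complex.ofReal_one, one_mul]
    congr 1
    rw [Finset.sum_congr rfl (fun a _ => Finset.mul_sum (Finset.range (n+1))
      (fun l => (n.choose l : ℂ) * (-1 : ℂ) ^ l * q ^ (l * (a + x)) / (1 + q ^ (l * d)))
      (χ a * (-1 : ℂ) ^ a)), Finset.sum_comm]
    apply Finset.sum_congr rfl
    intro l _
    rw [Finset.sum_div, Finset.mul_sum]
    apply Finset.sum_congr rfl
    intro a _
    rw [show l * (a + x) = l * a + l * x by ring, pow_add, pow_mul, pow_mul]
    ring
  have htend : Tendsto g (nhdsWithin 1 (Set.Iio 1)) (nhds ((2 / (1 - q) ^ n) *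
      ∑ a ∈ Finset.range d, χ a * (-1 : ℂ) ^ a * ∑ l ∈ Finset.range (n + 1),
        (n.choose l : ℂ) * (-1 : ℂ) ^ l * q ^ (l * (a + x)) / (1 + q ^ (l * d)))) := by
    rw [← hg1]
    exact hcont.continuousWithinAt.tendsto
  -- Step 2: eventual equality on Ioo 0 1
  unfold HasAbelSum
  apply htend.congr'
  filter_upwards [Ioo_mem_nhdsLT_of_mem (show (1:ℝ) ∈ Set.Ioc (0:ℝ) 1 by constructor <;> norm_num)]
    with r hr
  obtain ⟨hr0, hr1⟩ := hr
  have hz : ∀ l : ℕ, ‖(r : ℂ) * q ^ l‖ < 1 := hrq r hr0.le hr1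
  -- pointwise identity for the summand
  have hpt : ∀ m : ℕ, (2 * χ m * (-1 : ℂ) ^ m * ((1 - q ^ (m + x)) / (1 - q)) ^ n) * (r : ℂ) ^ m
      = ∑ l ∈ Finset.range (n + 1),
          (2 / (1 - q) ^ n * ((n.choose l : ℂ) * (-1 : ℂ) ^ l * q ^ (l * x))) *
            (χ m * (-1 : ℂ) ^ m * ((r : ℂ) * q ^ l) ^ m) := by
    intro m
    have hb : (1 - q ^ (m + x)) ^ n
        = ∑ l ∈ Finset.range (n + 1), (-(q ^ (m + x))) ^ l * (n.choose l : ℂ) := by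
      rw [show (1 : ℂ) - q ^ (m + x) = -(q ^ (m + x)) + 1 by ring, add_pow]
      simp
    rw [div_pow, hb, Finset.sum_div, Finset.mul_sum, Finset.sum_mul]
    apply Finset.sum_congr rfl
    intro l _
    rw [show (-(q ^ (m + x))) ^ l = (-1 : ℂ) ^ l * q ^ ((m + x) * l) by
        rw [neg_pow, ← pow_mul],
      show (m + x) * l = l * m + l * x by ring, pow_add,
      show ((r : ℂ) * q ^ l) ^ m = (r : ℂ) ^ m * q ^ (l * m) by rw [mul_pow, ← pow_mul]]
    ring
  rw [tsum_congr hpt, Summable.tsum_finsetSum (fun l _ => ((summable_aux hd0 hχ _ (hz l)).mul_left _))]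
  rw [Finset.sum_congr rfl (fun l _ => tsum_mul_left)]
  rw [Finset.sum_congr rfl (fun l _ => by rw [key hd hd0 hχ _ (hz l)])]
  simp only [hg]
  rw [Finset.mul_sum]
  apply Finset.sum_congr rfl
  intro l _
  ring
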